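/- Fix m ≥ 1, n ≥ 1, positive reals x₁,…,x_n, and positive reals y_i for i ∈ I ⊆ {1,…,n}. The function p̃(z) = (z/n) Σ_{i∈I} y_i/(1+y_i z) + (z/n) Σ_{j=1}^n g_{m-1,j}'(z)/g_{m-1,j}(z) is strictly increasing on (0, ∞), where g_{m-1,j}(z) = Σ_{k=0}^{m-1} z^k x_j^{m-1-k}. -/

import Mathlib

open Finset

open Finset

-- sign lemma
lemma sign_aux {a b : ℝ} (ha : 0 < a) (hab : a < b) {k l : ℕ} (h : k ≤ l) :
    ((k:ℝ) - l) * (a^k * b^l - a^l * b^k) ≤ 0 := by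
  have hb : 0 < b := ha.trans hab
  have hd : a^(l-k) ≤ b^(l-k) := pow_le_pow_left₀ ha.le hab.le _
  have e1 : a^l = a^k * a^(l-k) := by rw [← pow_add]; congr 1; omega
  have e2 : b^l = b^k * b^(l-k) := by rw [← pow_add]; congr 1; omega
  have h1 : 0 ≤ a^k * b^l - a^l * b^k := by
    rw [e1, e2]
    have : a^k * a^(l-k) * b^k ≤ a^k * b^(l-k) * b^k := by
      have := mul_le_mul_of_nonneg_left hd (pow_pos ha k).le
      nlinarith [pow_pos hb k]
    nlinarith
  have h2 : ((k:ℝ) - l) ≤ 0 := by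
    have : (k:ℝ) ≤ l := by exact_mod_cast h
    linarith
  exact mul_nonpos_of_nonpos_of_nonneg h2 h1

lemma sign_lemma {a b : ℝ} (ha : 0 < a) (hab : a < b) (k l : ℕ) :
    ((k:ℝ) - l) * (a^k * b^l - a^l * b^k) ≤ 0 := by
  rcases le_total k l with h | h
  · exact sign_aux ha hab h
  · have := sign_aux ha hab h
    nlinarith [this]

-- cross-multiplied inequality
lemma cross_le {m : ℕ} (c : ℕ → ℝ) (hc : ∀ k, 0 < c k) {a b : ℝ} (ha : 0 < a) (hab : a < b) :
    (∑ k ∈ range m, (k:ℝ) * a^k * c k) * (∑ l ∈ range m, b^l * c l)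
      ≤ (∑ k ∈ range m, (k:ℝ) * b^k * c k) * (∑ l ∈ range m, a^l * c l) := by
  have expand : ∀ (u v : ℝ → ℕ → ℝ), True := fun _ _ => trivial
  rw [Finset.sum_mul_sum, Finset.sum_mul_sum]
  set g : ℕ → ℕ → ℝ := fun k l => c k * c l * ((k:ℝ) * (b^k * a^l - a^k * b^l)) with hg
  have key : 0 ≤ ∑ k ∈ range m, ∑ l ∈ range m, (g k l + g l k) := by
    apply Finset.sum_nonneg; intro k _
    apply Finset.sum_nonneg; intro l _
    have := sign_lemma ha hab k l
    have hck := (hc k); have hcl := (hc l)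
    simp only [hg]
    nlinarith [mul_pos hck hcl]
  have comm : ∑ k ∈ range m, ∑ l ∈ range m, g l k = ∑ k ∈ range m, ∑ l ∈ range m, g k l :=
    Finset.sum_comm
  have split : ∑ k ∈ range m, ∑ l ∈ range m, (g k l + g l k)
      = 2 * ∑ k ∈ range m, ∑ l ∈ range m, g k l := by
    simp only [Finset.sum_add_distrib]
    rw [comm]; ring
  rw [split] at key
  have hsum : 0 ≤ ∑ k ∈ range m, ∑ l ∈ range m, g k l := by linarith
  have expand2 : ∑ k ∈ range m, ∑ l ∈ range m, g k l
      = (∑ k ∈ range m, ∑ l ∈ range m, (k:ℝ) * b^k * c k * (a^l * c l))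
        - ∑ k ∈ range m, ∑ l ∈ range m, (k:ℝ) * a^k * c k * (b^l * c l) := by
    rw [← Finset.sum_sub_distrib]
    apply Finset.sum_congr rfl; intro k _
    rw [← Finset.sum_sub_distrib]
    apply Finset.sum_congr rfl; intro l _
    simp only [hg]; ring
  rw [expand2] at hsum
  linarith

lemma cross_lt {m : ℕ} (hm : 2 ≤ m) (c : ℕ → ℝ) (hc : ∀ k, 0 < c k) {a b : ℝ}
    (ha : 0 < a) (hab : a < b) :
    (∑ k ∈ range m, (k:ℝ) * a^k * c k) * (∑ l ∈ range m, b^l * c l)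
      < (∑ k ∈ range m, (k:ℝ) * b^k * c k) * (∑ l ∈ range m, a^l * c l) := by
  rw [Finset.sum_mul_sum, Finset.sum_mul_sum]
  set g : ℕ → ℕ → ℝ := fun k l => c k * c l * ((k:ℝ) * (b^k * a^l - a^k * b^l)) with hg
  have key : 0 < ∑ k ∈ range m, ∑ l ∈ range m, (g k l + g l k) := by
    apply Finset.sum_pos'
    · intro k _
      apply Finset.sum_nonneg; intro l _
      have := sign_lemma ha hab k l
      have hck := (hc k); have hcl := (hc l)
      simp only [hg]
      nlinarith [mul_pos hck hcl]
    · refine ⟨1, Finset.mem_range.mpr (by omega), ?_⟩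
      apply Finset.sum_pos'
      · intro l _
        have := sign_lemma ha hab 1 l
        have hck := (hc 1); have hcl := (hc l)
        simp only [hg]
        nlinarith [mul_pos hck hcl]
      · refine ⟨0, Finset.mem_range.mpr (by omega), ?_⟩
        simp only [hg]
        have hck := (hc 1); have hcl := (hc 0)
        simp
        nlinarith [mul_pos hck hcl]
  have comm : ∑ k ∈ range m, ∑ l ∈ range m, g l k = ∑ k ∈ range m, ∑ l ∈ range m, g k l :=
    Finset.sum_comm
  have split : ∑ k ∈ range m, ∑ l ∈ range m, (g k l + g l k)
      = 2 * ∑ k ∈ range m, ∑ l ∈ range m, g k l := by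
    simp only [Finset.sum_add_distrib]
    rw [comm]; ring
  rw [split] at key
  have hsum : 0 < ∑ k ∈ range m, ∑ l ∈ range m, g k l := by linarith
  have expand2 : ∑ k ∈ range m, ∑ l ∈ range m, g k l
      = (∑ k ∈ range m, ∑ l ∈ range m, (k:ℝ) * b^k * c k * (a^l * c l))
        - ∑ k ∈ range m, ∑ l ∈ range m, (k:ℝ) * a^k * c k * (b^l * c l) := by
    rw [← Finset.sum_sub_distrib]
    apply Finset.sum_congr rfl; intro k _
    rw [← Finset.sum_sub_distrib]
    apply Finset.sum_congr rfl; intro l _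
    simp only [hg]; ring
  rw [expand2] at hsum
  linarith

lemma deriv_g (m : ℕ) (c : ℝ) (z : ℝ) :
    deriv (fun s : ℝ => ∑ k ∈ Finset.range m, s ^ k * c ^ (m - 1 - k)) z
      = ∑ k ∈ Finset.range m, (k:ℝ) * z ^ (k-1) * c ^ (m - 1 - k) := by
  have h : HasDerivAt (fun s : ℝ => ∑ k ∈ Finset.range m, s ^ k * c ^ (m - 1 - k))
      (∑ k ∈ Finset.range m, (k:ℝ) * z ^ (k-1) * c ^ (m - 1 - k)) z := by
    apply HasDerivAt.fun_sum
    intro k _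
    simpa using (hasDerivAt_pow k z).mul_const (c ^ (m - 1 - k))
  exact h.deriv

lemma mul_deriv (m : ℕ) (c : ℝ) (z : ℝ) :
    z * ∑ k ∈ Finset.range m, (k:ℝ) * z ^ (k-1) * c ^ (m - 1 - k)
      = ∑ k ∈ Finset.range m, (k:ℝ) * z ^ k * c ^ (m - 1 - k) := by
  rw [Finset.mul_sum]
  apply Finset.sum_congr rfl
  intro k _
  rcases k with _ | k
  · simp
  · have : k + 1 - 1 = k := rfl
    rw [this, pow_succ]; push_cast; ring

/-- The function
`p̃(z) = (z/n) Σ_{i∈I} y_i/(1+y_i z) + (z/n) Σ_j g_{m-1,j}'(z)/g_{m-1,j}(z)`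
is strictly increasing on `(0, ∞)` (when `I` is nonempty or `m ≥ 2`). -/
theorem stmt_4 (m n : ℕ) (hm : 1 ≤ m) (hn : 1 ≤ n) (x y : Fin n → ℝ)
    (hx : ∀ j, 0 < x j) (I : Finset (Fin n)) (hy : ∀ i ∈ I, 0 < y i)
    (hcond : I.Nonempty ∨ 2 ≤ m) :
    StrictMonoOn
      (fun z : ℝ =>
        (z / n) * (∑ i ∈ I, y i / (1 + y i * z)) +
          (z / n) * (∑ j : Fin n,
            deriv (fun s : ℝ => ∑ k ∈ Finset.range m, s ^ k * x j ^ (m - 1 - k)) z /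
              (∑ k ∈ Finset.range m, z ^ k * x j ^ (m - 1 - k))))
      (Set.Ioi 0) := by
  have hn0 : (0:ℝ) < n := by exact_mod_cast hn
  -- auxiliary: denominator positive
  have hden : ∀ (j : Fin n) {z : ℝ}, 0 < z →
      0 < ∑ k ∈ Finset.range m, z ^ k * x j ^ (m - 1 - k) := by
    intro j z hz
    apply Finset.sum_pos
    · intro k _; exact mul_pos (pow_pos hz k) (pow_pos (hx j) _)
    · exact Finset.nonempty_range_iff.mpr (by omega)
  -- rewrite f z for z > 0
  have frw : ∀ {z : ℝ}, 0 < z →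
      ((z / n) * (∑ i ∈ I, y i / (1 + y i * z)) +
          (z / n) * (∑ j : Fin n,
            deriv (fun s : ℝ => ∑ k ∈ Finset.range m, s ^ k * x j ^ (m - 1 - k)) z /
              (∑ k ∈ Finset.range m, z ^ k * x j ^ (m - 1 - k))))
      = (1 / (n:ℝ)) * ((∑ i ∈ I, z * y i / (1 + y i * z)) +
          (∑ j : Fin n,
            (∑ k ∈ Finset.range m, (k:ℝ) * z ^ k * x j ^ (m - 1 - k)) /
              (∑ k ∈ Finset.range m, z ^ k * x j ^ (m - 1 - k)))) := by
    intro z hz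
    have e1 : (z / n) * (∑ i ∈ I, y i / (1 + y i * z))
        = (1 / (n:ℝ)) * ∑ i ∈ I, z * y i / (1 + y i * z) := by
      rw [Finset.mul_sum, Finset.mul_sum]
      apply Finset.sum_congr rfl; intro i _; ring
    have e2 : (z / n) * (∑ j : Fin n,
            deriv (fun s : ℝ => ∑ k ∈ Finset.range m, s ^ k * x j ^ (m - 1 - k)) z /
              (∑ k ∈ Finset.range m, z ^ k * x j ^ (m - 1 - k)))
        = (1 / (n:ℝ)) * ∑ j : Fin n,
            (∑ k ∈ Finset.range m, (k:ℝ) * z ^ k * x j ^ (m - 1 - k)) /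
              (∑ k ∈ Finset.range m, z ^ k * x j ^ (m - 1 - k)) := by
      rw [Finset.mul_sum, Finset.mul_sum]
      apply Finset.sum_congr rfl; intro j _
      rw [deriv_g, ← mul_deriv m (x j) z]
      field_simp
    rw [e1, e2, mul_add]
  intro a ha b hb hab
  simp only [Set.mem_Ioi] at ha hb
  simp only
  rw [frw ha, frw hb]
  apply mul_lt_mul_of_pos_left _ (by positivity)
  -- per-term facts
  have termA : ∀ i ∈ I, a * y i / (1 + y i * a) < b * y i / (1 + y i * b) := by
    intro i hi
    have hyi := hy i hi
    have d1 : 0 < 1 + y i * a := by nlinarith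
    have d2 : 0 < 1 + y i * b := by nlinarith
    rw [div_lt_div_iff₀ d1 d2]
    nlinarith
  have termB_le : ∀ j : Fin n,
      (∑ k ∈ Finset.range m, (k:ℝ) * a ^ k * x j ^ (m - 1 - k)) /
          (∑ k ∈ Finset.range m, a ^ k * x j ^ (m - 1 - k))
        ≤ (∑ k ∈ Finset.range m, (k:ℝ) * b ^ k * x j ^ (m - 1 - k)) /
          (∑ k ∈ Finset.range m, b ^ k * x j ^ (m - 1 - k)) := by
    intro j
    rw [div_le_div_iff₀ (hden j ha) (hden j hb)]
    exact cross_le (fun k => x j ^ (m - 1 - k)) (fun k => pow_pos (hx j) _) ha hab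
  rcases hcond with hI | hm2
  · apply add_lt_add_of_lt_of_le
    · exact Finset.sum_lt_sum_of_nonempty hI termA
    · exact Finset.sum_le_sum (fun j _ => termB_le j)
  · apply add_lt_add_of_le_of_lt
    · exact Finset.sum_le_sum (fun i hi => (termA i hi).le)
    · apply Finset.sum_lt_sum_of_nonempty
      · exact Finset.univ_nonempty_iff.mpr (Fin.pos_iff_nonempty.mp (by omega))
      · intro j _
        rw [div_lt_div_iff₀ (hden j ha) (hden j hb)]
        exact cross_lt hm2 (fun k => x j ^ (m - 1 - k)) (fun k => pow_pos (hx j) _) ha hab
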